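/- arXiv:1204.5082 — 2 statements merged into one kernel-verified Lean document; each statement's English description precedes it below -/
import Mathlib

section
/- Let (T_t) be a positivity-preserving standard semigroup and P_y its subordinated Poisson semigroup. Then for every f ≥ 0 and 0 < t ≤ y: (i) (P_y f)/y ≤ (P_t f)/t pointwise, and (ii) |(P_y − P_{y+t}) f| ≤ (8t/y) P_{y/2} f pointwise. -/
open MeasureTheory Set

private lemma poisson_scalar_bound (u y s : ℝ) (hu : 0 < u) (hy : 0 < y) (hs : y ≤ s) :
    Real.exp (-(s^2)/(4*u)) * (1 + s^2/(2*u)) ≤ 4 * Real.exp (-(y^2)/(16*u)) := by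
  set b := s^2/(4*u) with hb
  have hb0 : 0 ≤ b := by positivity
  have h2b : s^2/(2*u) = 2*b := by rw [hb]; ring
  have h1 : 1 + 2*b ≤ 4 * Real.exp (3*b/4) := by
    have := Real.add_one_le_exp (3*b/4)
    nlinarith
  have h2 : Real.exp (-b) * (1 + 2*b) ≤ 4 * Real.exp (-b/4) := by
    calc Real.exp (-b) * (1 + 2*b) ≤ Real.exp (-b) * (4 * Real.exp (3*b/4)) :=
          mul_le_mul_of_nonneg_left h1 (Real.exp_pos _).le
      _ = 4 * Real.exp (-b + 3*b/4) := by rw [Real.exp_add]; ring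
      _ = 4 * Real.exp (-b/4) := by ring_nf
  have h3 : Real.exp (-b/4) ≤ Real.exp (-(y^2)/(16*u)) := by
    apply Real.exp_le_exp.mpr
    have hys : y^2 ≤ s^2 := by nlinarith
    have e : -(s^2/(4*u))/4 = -(s^2)/(16*u) := by
      rw [neg_div, neg_div, div_div]
      ring_nf
    rw [hb, e, neg_div, neg_div, neg_le_neg_iff]
    gcongr
  have harg : -(s^2)/(4*u) = -b := by rw [hb]; ring
  rw [harg, h2b]
  linarith

private lemma poisson_deriv (u : ℝ) (hu : 0 < u) (s : ℝ) :
    HasDerivAt (fun s : ℝ => s * Real.exp (-(s^2)/(4*u)))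
      (Real.exp (-(s^2)/(4*u)) * (1 - s^2/(2*u))) s := by
  have h1 : HasDerivAt (fun s : ℝ => -(s^2)/(4*u)) (-(2*s)/(4*u)) s := by
    have := ((hasDerivAt_pow 2 s).neg).div_const (4*u)
    simpa [pow_one] using this
  have h2 : HasDerivAt (fun s : ℝ => Real.exp (-(s^2)/(4*u)))
      (Real.exp (-(s^2)/(4*u)) * (-(2*s)/(4*u))) s :=
    (Real.hasDerivAt_exp _).comp s h1
  have h3 := (hasDerivAt_id s).mul h2
  refine h3.congr_deriv ?_
  have hu' : u ≠ 0 := hu.ne'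
  simp only [id]
  ring

private lemma poisson_diff_bound (u y t : ℝ) (hu : 0 < u) (hy : 0 < y) (ht : 0 < t) :
    |y * Real.exp (-(y^2)/(4*u)) - (y+t) * Real.exp (-((y+t)^2)/(4*u))| ≤
      4 * Real.exp (-(y^2)/(16*u)) * t := by
  have hder : ∀ s ∈ Icc y (y+t),
      HasDerivWithinAt (fun s : ℝ => s * Real.exp (-(s^2)/(4*u)))
        (Real.exp (-(s^2)/(4*u)) * (1 - s^2/(2*u))) (Icc y (y+t)) s :=
    fun s _ => (poisson_deriv u hu s).hasDerivWithinAt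
  have hbound : ∀ s ∈ Icc y (y+t),
      ‖Real.exp (-(s^2)/(4*u)) * (1 - s^2/(2*u))‖ ≤ 4 * Real.exp (-(y^2)/(16*u)) := by
    intro s hs
    rw [Real.norm_eq_abs, abs_mul, abs_of_pos (Real.exp_pos _)]
    have hb0 : 0 ≤ s^2/(2*u) := by positivity
    have habs : |1 - s^2/(2*u)| ≤ 1 + s^2/(2*u) :=
      abs_le.mpr ⟨by linarith, by linarith⟩
    calc Real.exp (-(s^2)/(4*u)) * |1 - s^2/(2*u)|
        ≤ Real.exp (-(s^2)/(4*u)) * (1 + s^2/(2*u)) :=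
          mul_le_mul_of_nonneg_left habs (Real.exp_pos _).le
      _ ≤ 4 * Real.exp (-(y^2)/(16*u)) := poisson_scalar_bound u y s hu hy hs.1
  have := (convex_Icc y (y+t)).norm_image_sub_le_of_norm_hasDerivWithin_le
    hder hbound (left_mem_Icc.mpr (by linarith)) (right_mem_Icc.mpr (by linarith))
  rw [Real.norm_eq_abs, Real.norm_eq_abs] at this
  rw [abs_sub_comm]
  simpa [abs_of_pos ht] using this

/-- Let `(T_t)` be a positivity-preserving standard semigroup and `P_y` its
subordinated Poisson semigroup, given by the subordination formula
`P_y f = (1/(2√π)) ∫_0^∞ y e^{−y²/(4u)} u^{−3/2} T_u f du`. Then for every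
`f ≥ 0` and `0 < t ≤ y`: (i) `(P_y f)/y ≤ (P_t f)/t` pointwise, and
(ii) `|(P_y − P_{y+t}) f| ≤ (8t/y) P_{y/2} f` pointwise. -/
theorem subordinated_poisson_pointwise_bounds
    {α : Type*} [MeasurableSpace α] (μ : Measure α) [SigmaFinite μ]
    (T P : ℝ → (α → ℝ) → (α → ℝ))
    -- (T_t) is a positivity-preserving standard semigroup
    (hsemi : ∀ s t : ℝ, 0 ≤ s → 0 ≤ t → T (s + t) = T s ∘ T t)
    (hT0 : T 0 = id)
    (hpos : ∀ t : ℝ, 0 ≤ t → ∀ f : α → ℝ, 0 ≤ f → 0 ≤ T t f)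
    (hunital : ∀ t : ℝ, 0 ≤ t → T t 1 = 1)
    -- subordination formula defining `P`
    (hP : ∀ y : ℝ, 0 < y → ∀ f : α → ℝ, ∀ x,
      P y f x = (1 / (2 * Real.sqrt Real.pi)) *
        ∫ u in Ioi (0 : ℝ),
          y * Real.exp (-(y ^ 2) / (4 * u)) * u ^ (-(3 : ℝ) / 2) * T u f x)
    -- integrability of the subordination integrand
    (hint : ∀ y : ℝ, 0 < y → ∀ f : α → ℝ, 0 ≤ f → ∀ x,
      IntegrableOn
        (fun u => y * Real.exp (-(y ^ 2) / (4 * u)) * u ^ (-(3 : ℝ) / 2) * T u f x)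
        (Ioi (0 : ℝ)))
    (f : α → ℝ) (hf : 0 ≤ f) (t y : ℝ) (ht : 0 < t) (hty : t ≤ y) :
    (∀ x, P y f x / y ≤ P t f x / t) ∧
    (∀ x, |P y f x - P (y + t) f x| ≤ (8 * t / y) * P (y / 2) f x) := by
  have hy : 0 < y := lt_of_lt_of_le ht hty
  have hc : (0:ℝ) < 1 / (2 * Real.sqrt Real.pi) := by
    have := Real.sqrt_pos.mpr Real.pi_pos
    positivity
  constructor
  · intro x
    rw [div_le_div_iff₀ hy ht, hP y hy f x, hP t ht f x]
    have key : (∫ u in Ioi (0:ℝ),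
          t * (y * Real.exp (-(y ^ 2) / (4 * u)) * u ^ (-(3 : ℝ) / 2) * T u f x)) ≤
        ∫ u in Ioi (0:ℝ),
          y * (t * Real.exp (-(t ^ 2) / (4 * u)) * u ^ (-(3 : ℝ) / 2) * T u f x) := by
      apply setIntegral_mono_on ((hint y hy f hf x).const_mul t)
        ((hint t ht f hf x).const_mul y) measurableSet_Ioi
      intro u hu
      have hu0 : 0 < u := hu
      have hE : Real.exp (-(y ^ 2) / (4 * u)) ≤ Real.exp (-(t ^ 2) / (4 * u)) := by
        apply Real.exp_le_exp.mpr
        have ht2 : t^2 ≤ y^2 := by nlinarith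
        rw [neg_div, neg_div, neg_le_neg_iff]
        gcongr
      have hT : 0 ≤ T u f x := hpos u hu0.le f hf x
      have hw : 0 ≤ u ^ (-(3 : ℝ) / 2) := Real.rpow_nonneg hu0.le _
      calc t * (y * Real.exp (-(y ^ 2) / (4 * u)) * u ^ (-(3 : ℝ) / 2) * T u f x)
          = (t * y * (u ^ (-(3 : ℝ) / 2) * T u f x)) * Real.exp (-(y ^ 2) / (4 * u)) := by
            ring
        _ ≤ (t * y * (u ^ (-(3 : ℝ) / 2) * T u f x)) * Real.exp (-(t ^ 2) / (4 * u)) := by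
            apply mul_le_mul_of_nonneg_left hE
            positivity
        _ = y * (t * Real.exp (-(t ^ 2) / (4 * u)) * u ^ (-(3 : ℝ) / 2) * T u f x) := by
            ring
    rw [integral_const_mul, integral_const_mul] at key
    calc (1 / (2 * Real.sqrt Real.pi)) * (∫ u in Ioi (0:ℝ),
          y * Real.exp (-(y ^ 2) / (4 * u)) * u ^ (-(3 : ℝ) / 2) * T u f x) * t
        = (1 / (2 * Real.sqrt Real.pi)) * (t * ∫ u in Ioi (0:ℝ),
          y * Real.exp (-(y ^ 2) / (4 * u)) * u ^ (-(3 : ℝ) / 2) * T u f x) := by ring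
      _ ≤ (1 / (2 * Real.sqrt Real.pi)) * (y * ∫ u in Ioi (0:ℝ),
          t * Real.exp (-(t ^ 2) / (4 * u)) * u ^ (-(3 : ℝ) / 2) * T u f x) :=
          mul_le_mul_of_nonneg_left key hc.le
      _ = (1 / (2 * Real.sqrt Real.pi)) * (∫ u in Ioi (0:ℝ),
          t * Real.exp (-(t ^ 2) / (4 * u)) * u ^ (-(3 : ℝ) / 2) * T u f x) * y := by ring
  · intro x
    have hyt : 0 < y + t := by linarith
    have hy2 : 0 < y / 2 := by linarith
    rw [hP y hy f x, hP (y+t) hyt f x, hP (y/2) hy2 f x]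
    have IA := hint y hy f hf x
    have IB := hint (y+t) hyt f hf x
    have IC := hint (y/2) hy2 f hf x
    rw [← mul_sub, abs_mul, abs_of_pos hc, ← integral_sub IA IB]
    have step1 : |∫ u in Ioi (0:ℝ),
        (y * Real.exp (-(y ^ 2) / (4 * u)) * u ^ (-(3 : ℝ) / 2) * T u f x -
         (y+t) * Real.exp (-((y+t) ^ 2) / (4 * u)) * u ^ (-(3 : ℝ) / 2) * T u f x)| ≤
        ∫ u in Ioi (0:ℝ), (8 * t / y) *
          ((y/2) * Real.exp (-((y/2) ^ 2) / (4 * u)) * u ^ (-(3 : ℝ) / 2) * T u f x) := by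
      calc |∫ u in Ioi (0:ℝ), _| ≤ ∫ u in Ioi (0:ℝ),
            |y * Real.exp (-(y ^ 2) / (4 * u)) * u ^ (-(3 : ℝ) / 2) * T u f x -
             (y+t) * Real.exp (-((y+t) ^ 2) / (4 * u)) * u ^ (-(3 : ℝ) / 2) * T u f x| := by
            simpa [Real.norm_eq_abs] using
              norm_integral_le_integral_norm (μ := volume.restrict (Ioi 0))
                (fun u => y * Real.exp (-(y ^ 2) / (4 * u)) * u ^ (-(3 : ℝ) / 2) * T u f x -
                  (y+t) * Real.exp (-((y+t) ^ 2) / (4 * u)) * u ^ (-(3 : ℝ) / 2) * T u f x)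
        _ ≤ _ := by
            apply setIntegral_mono_on (IA.sub IB).abs (IC.const_mul _) measurableSet_Ioi
            intro u hu
            have hu0 : 0 < u := hu
            have hT : 0 ≤ T u f x := hpos u hu0.le f hf x
            have hw : 0 ≤ u ^ (-(3 : ℝ) / 2) := Real.rpow_nonneg hu0.le _
            have key := poisson_diff_bound u y t hu0 hy ht
            simp only [Pi.sub_apply]
            have e1 : y * Real.exp (-(y ^ 2) / (4 * u)) * u ^ (-(3 : ℝ) / 2) * T u f x -
                (y+t) * Real.exp (-((y+t) ^ 2) / (4 * u)) * u ^ (-(3 : ℝ) / 2) * T u f x =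
                (y * Real.exp (-(y^2)/(4*u)) - (y+t) * Real.exp (-((y+t)^2)/(4*u))) *
                  (u ^ (-(3 : ℝ) / 2) * T u f x) := by ring
            rw [e1, abs_mul, abs_of_nonneg (mul_nonneg hw hT)]
            have e2 : -((y/2) ^ 2) / (4 * u) = -(y^2)/(16*u) := by ring
            rw [e2]
            calc |y * Real.exp (-(y^2)/(4*u)) - (y+t) * Real.exp (-((y+t)^2)/(4*u))| *
                  (u ^ (-(3 : ℝ) / 2) * T u f x)
                ≤ (4 * Real.exp (-(y^2)/(16*u)) * t) * (u ^ (-(3 : ℝ) / 2) * T u f x) :=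
                  mul_le_mul_of_nonneg_right key (mul_nonneg hw hT)
              _ = 8 * t / y * (y / 2 * Real.exp (-(y^2) / (16 * u)) * u ^ (-(3 : ℝ) / 2) * T u f x) := by
                  field_simp
                  ring
    rw [integral_const_mul] at step1
    calc (1 / (2 * Real.sqrt Real.pi)) * |∫ u in Ioi (0:ℝ), _|
        ≤ (1 / (2 * Real.sqrt Real.pi)) * ((8 * t / y) * ∫ u in Ioi (0:ℝ),
          (y/2) * Real.exp (-((y/2) ^ 2) / (4 * u)) * u ^ (-(3 : ℝ) / 2) * T u f x) :=
          mul_le_mul_of_nonneg_left step1 hc.le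
      _ = 8 * t / y * ((1 / (2 * Real.sqrt Real.pi)) * ∫ u in Ioi (0:ℝ),
          (y/2) * Real.exp (-((y/2) ^ 2) / (4 * u)) * u ^ (-(3 : ℝ) / 2) * T u f x) := by ring
end

section
/- Let G be a discrete group and φ : G → ℝ a conditionally negative function with φ(e) = 0 and φ(g) = φ(g⁻¹), and let T_t be the semigroup on the group algebra defined by T_t(λ_g) = e^{−tφ(g)} λ_g. Then for finite linear combinations x = Σ_g a_g λ_g, the gradient form satisfies Γ(x, x) = Σ_{g,h} \bar{a_g} a_h K_φ(g,h) λ_{g⁻¹h} and the iterated gradient form satisfies Γ₂(x, x) = Σ_{g,h} \bar{a_g} a_h K_φ(g,h)² λ_{g⁻¹h}, where K_φ(g,h) = (1/2)(φ(g)+φ(h)−φ(g⁻¹h)). In particular Γ₂ ≥ 0 holds automatically (since K_φ² is positive definite whenever K_φ is). -/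
open Finset MonoidAlgebra

variable {G : Type*} [Group G]

/-- The generator `L(λ_g) = −φ(g) λ_g` of the semigroup `T_t(λ_g) = e^{−tφ(g)} λ_g`
on the group algebra, extended linearly. -/
noncomputable def genL (φ : G → ℝ) (x : MonoidAlgebra ℂ G) : MonoidAlgebra ℂ G :=
  MonoidAlgebra.ofCoeff (x.coeff.sum fun g a => Finsupp.single g ((-(φ g) : ℂ) * a))

/-- The canonical involution `(Σ a_g λ_g)* = Σ conj(a_g) λ_{g⁻¹}` on the group
algebra. -/
noncomputable def gaStar (x : MonoidAlgebra ℂ G) : MonoidAlgebra ℂ G :=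
  MonoidAlgebra.ofCoeff (x.coeff.sum fun g a => Finsupp.single g⁻¹ (starRingEnd ℂ a))

/-- The gradient form `Γ(x,y) = (1/2)[L(x*y) − (Lx*)y − x*(Ly)]` on the group
algebra. -/
noncomputable def gaGamma (φ : G → ℝ) (x y : MonoidAlgebra ℂ G) : MonoidAlgebra ℂ G :=
  (1 / 2 : ℂ) • (genL φ (gaStar x * y) - genL φ (gaStar x) * y - gaStar x * genL φ y)

/-- The iterated gradient form
`Γ₂(x,y) = (1/2)[LΓ(x,y) − Γ(x, Ly) − Γ(Lx, y)]` on the group algebra. -/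
noncomputable def gaGammaTwo (φ : G → ℝ) (x y : MonoidAlgebra ℂ G) : MonoidAlgebra ℂ G :=
  (1 / 2 : ℂ) • (genL φ (gaGamma φ x y) - gaGamma φ x (genL φ y) - gaGamma φ (genL φ x) y)

/-- The Gromov form `K_φ(g,h) = (1/2)(φ(g) + φ(h) − φ(g⁻¹h))`. -/
noncomputable def gromovK (φ : G → ℝ) (g h : G) : ℝ := (φ g + φ h - φ (g⁻¹ * h)) / 2


set_option linter.unusedSectionVars false
set_option maxHeartbeats 1600000

open ComplexOrder Matrix in
section
lemma genL_single (φ : G → ℝ) (g : G) (a : ℂ) :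
    genL φ (MonoidAlgebra.single g a) = MonoidAlgebra.single g ((-(φ g) : ℂ) * a) := by
  rw [genL, coeff_single, Finsupp.sum_single_index (by simp), ofCoeff_single]
lemma gaStar_single (g : G) (a : ℂ) :
    gaStar (MonoidAlgebra.single g a : MonoidAlgebra ℂ G) = MonoidAlgebra.single g⁻¹ (starRingEnd ℂ a) := by
  rw [gaStar, coeff_single, Finsupp.sum_single_index (by simp), ofCoeff_single]
lemma genL_add (φ : G → ℝ) (x y : MonoidAlgebra ℂ G) :
    genL φ (x + y) = genL φ x + genL φ y := by
  rw [genL, genL, genL, coeff_add, Finsupp.sum_add_index' (by simp) (by intros; rw [mul_add, Finsupp.single_add]), ofCoeff_add]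
lemma gaStar_add (x y : MonoidAlgebra ℂ G) : gaStar (x + y) = gaStar x + gaStar y := by
  rw [gaStar, gaStar, gaStar, coeff_add, Finsupp.sum_add_index' (by simp) (by intros; rw [map_add, Finsupp.single_add]), ofCoeff_add]
lemma genL_sum {ι : Type*} (φ : G → ℝ) (s : Finset ι) (f : ι → MonoidAlgebra ℂ G) :
    genL φ (∑ i ∈ s, f i) = ∑ i ∈ s, genL φ (f i) :=
  map_sum (AddMonoidHom.mk' (genL φ) (genL_add φ)) f s
lemma gaStar_sum {ι : Type*} (s : Finset ι) (f : ι → MonoidAlgebra ℂ G) :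
    gaStar (∑ i ∈ s, f i) = ∑ i ∈ s, gaStar (f i) :=
  map_sum (AddMonoidHom.mk' gaStar gaStar_add) f s

lemma gaGamma_single (φ : G → ℝ) (hφinv : ∀ g : G, φ g⁻¹ = φ g) (g h : G) (a b : ℂ) :
    gaGamma φ (MonoidAlgebra.single g a) (MonoidAlgebra.single h b)
      = MonoidAlgebra.single (g⁻¹ * h) (starRingEnd ℂ a * b * (gromovK φ g h : ℂ)) := by
  unfold gaGamma
  rw [gaStar_single, MonoidAlgebra.single_mul_single, genL_single, genL_single,
    MonoidAlgebra.single_mul_single, genL_single, MonoidAlgebra.single_mul_single,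
    ← MonoidAlgebra.single_sub, ← MonoidAlgebra.single_sub, MonoidAlgebra.smul_single]
  congr 1
  rw [gromovK, ← hφinv g]
  push_cast
  rw [smul_eq_mul]
  ring

lemma gaGammaTwo_single (φ : G → ℝ) (hφinv : ∀ g : G, φ g⁻¹ = φ g) (g h : G) (a b : ℂ) :
    gaGammaTwo φ (MonoidAlgebra.single g a) (MonoidAlgebra.single h b)
      = MonoidAlgebra.single (g⁻¹ * h) (starRingEnd ℂ a * b * ((gromovK φ g h : ℂ)) ^ 2) := by
  unfold gaGammaTwo
  rw [gaGamma_single φ hφinv, genL_single, genL_single, genL_single,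
    gaGamma_single φ hφinv, gaGamma_single φ hφinv,
    ← MonoidAlgebra.single_sub, ← MonoidAlgebra.single_sub, MonoidAlgebra.smul_single]
  congr 1
  rw [gromovK, ← hφinv g]
  push_cast
  rw [smul_eq_mul]
  simp only [_root_.map_mul, map_neg, map_sub, _root_.map_add, Complex.conj_ofReal, map_div₀, map_ofNat]
  ring

lemma gaGamma_sum_left (φ : G → ℝ) {ι : Type*} (s : Finset ι) (f : ι → MonoidAlgebra ℂ G)
    (y : MonoidAlgebra ℂ G) :
    gaGamma φ (∑ i ∈ s, f i) y = ∑ i ∈ s, gaGamma φ (f i) y := by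
  unfold gaGamma
  rw [gaStar_sum, Finset.sum_mul, genL_sum, genL_sum, Finset.sum_mul, Finset.sum_mul,
    ← Finset.sum_sub_distrib, ← Finset.sum_sub_distrib, Finset.smul_sum]

lemma gaGamma_sum_right (φ : G → ℝ) {ι : Type*} (s : Finset ι) (f : ι → MonoidAlgebra ℂ G)
    (x : MonoidAlgebra ℂ G) :
    gaGamma φ x (∑ i ∈ s, f i) = ∑ i ∈ s, gaGamma φ x (f i) := by
  unfold gaGamma
  rw [Finset.mul_sum, genL_sum, genL_sum, Finset.mul_sum, Finset.mul_sum,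
    ← Finset.sum_sub_distrib, ← Finset.sum_sub_distrib, Finset.smul_sum]

lemma gaGammaTwo_sum_left (φ : G → ℝ) {ι : Type*} (s : Finset ι) (f : ι → MonoidAlgebra ℂ G)
    (y : MonoidAlgebra ℂ G) :
    gaGammaTwo φ (∑ i ∈ s, f i) y = ∑ i ∈ s, gaGammaTwo φ (f i) y := by
  unfold gaGammaTwo
  rw [gaGamma_sum_left, genL_sum, gaGamma_sum_left, genL_sum, gaGamma_sum_left,
    ← Finset.sum_sub_distrib, ← Finset.sum_sub_distrib, Finset.smul_sum]

lemma gaGammaTwo_sum_right (φ : G → ℝ) {ι : Type*} (s : Finset ι) (f : ι → MonoidAlgebra ℂ G)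
    (x : MonoidAlgebra ℂ G) :
    gaGammaTwo φ x (∑ i ∈ s, f i) = ∑ i ∈ s, gaGammaTwo φ x (f i) := by
  unfold gaGammaTwo
  rw [gaGamma_sum_right, genL_sum, genL_sum, gaGamma_sum_right, gaGamma_sum_right,
    ← Finset.sum_sub_distrib, ← Finset.sum_sub_distrib, Finset.smul_sum]

lemma dsum_ext (f : G →₀ ℂ) (w : G → G → ℂ) {t : Finset G} (ht : f.support ⊆ t) :
    ∑ g ∈ f.support, ∑ h ∈ f.support, starRingEnd ℂ (f g) * f h * w g h
      = ∑ g ∈ t, ∑ h ∈ t, starRingEnd ℂ (f g) * f h * w g h := by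
  rw [Finset.sum_congr rfl (fun g _ => Finset.sum_subset ht
    (fun h _ hh => by simp [Finsupp.notMem_support_iff.mp hh]))]
  exact Finset.sum_subset ht (fun g _ hg => by simp [Finsupp.notMem_support_iff.mp hg])

lemma Kpos (φ : G → ℝ) (hφe : φ 1 = 0) (hφinv : ∀ g : G, φ g⁻¹ = φ g)
    (hcn : ∀ a : G →₀ ℂ, (∑ g ∈ a.support, a g) = 0 →
      (∑ g ∈ a.support, ∑ h ∈ a.support,
          starRingEnd ℂ (a g) * a h * (φ (g⁻¹ * h) : ℂ)).re ≤ 0)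
    (c : G →₀ ℂ) :
    0 ≤ (∑ g ∈ c.support, ∑ h ∈ c.support,
        starRingEnd ℂ (c g) * c h * (gromovK φ g h : ℂ)).re := by
  classical
  set s : ℂ := ∑ g ∈ c.support, c g with hs
  set t : Finset G := insert 1 c.support with hts
  have h1t : (1 : G) ∈ t := Finset.mem_insert_self _ _
  have hct : c.support ⊆ t := Finset.subset_insert _ _
  set e : G →₀ ℂ := Finsupp.single 1 s with he
  set a : G →₀ ℂ := c - e with ha
  have hae : ∀ g, a g = c g - e g := fun g => rfl
  have hat : a.support ⊆ t := by
    intro g hg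
    rcases eq_or_ne g 1 with rfl | hg1
    · exact h1t
    · refine Finset.mem_insert_of_mem (Finsupp.mem_support_iff.mpr fun h0 => ?_)
      have := Finsupp.mem_support_iff.mp hg
      apply this
      rw [hae, h0, he, Finsupp.single_apply, if_neg (fun h => hg1 h.symm), sub_zero]
  -- collapse lemmas
  have collapse : ∀ X : G → ℂ, ∑ h ∈ t, e h * X h = s * X 1 := by
    intro X
    simp [he, Finsupp.single_apply, ite_mul, Finset.sum_ite_eq, h1t]
  have collapse' : ∀ X : G → ℂ, ∑ h ∈ t, starRingEnd ℂ (e h) * X h = starRingEnd ℂ s * X 1 := by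
    intro X
    simp [he, Finsupp.single_apply, apply_ite (starRingEnd ℂ), ite_mul, Finset.sum_ite_eq, h1t]
  -- sums over t
  set T : ℂ := ∑ h ∈ t, c h * (φ h : ℂ) with hT
  set U : ℂ := ∑ g ∈ t, starRingEnd ℂ (c g) * (φ g : ℂ) with hU
  set Qc : ℂ := ∑ g ∈ t, ∑ h ∈ t, starRingEnd ℂ (c g) * c h * (φ (g⁻¹ * h) : ℂ) with hQc
  set Qa : ℂ := ∑ g ∈ t, ∑ h ∈ t, starRingEnd ℂ (a g) * a h * (φ (g⁻¹ * h) : ℂ) with hQa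
  have hst : ∑ g ∈ t, c g = s := by
    rw [hs]
    exact (Finset.sum_subset hct (fun g _ hg => Finsupp.notMem_support_iff.mp hg)).symm
  -- total mass of a is zero
  have hasum : ∑ g ∈ a.support, a g = 0 := by
    rw [show ∑ g ∈ a.support, a g = ∑ g ∈ t, a g from
      Finset.sum_subset hat (fun g _ hg => Finsupp.notMem_support_iff.mp hg)]
    simp only [hae, Finset.sum_sub_distrib]
    rw [hst, show ∑ g ∈ t, e g = s by simpa using collapse (fun _ => 1), sub_self]
  -- key identity (II): Qa = Qc - s * U - conj s * T
  have hA2 : ∑ g ∈ t, ∑ h ∈ t, starRingEnd ℂ (c g) * e h * (φ (g⁻¹ * h) : ℂ) = s * U := by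
    rw [hU, Finset.mul_sum]
    refine Finset.sum_congr rfl fun g _ => ?_
    calc ∑ h ∈ t, starRingEnd ℂ (c g) * e h * (φ (g⁻¹ * h) : ℂ)
        = ∑ h ∈ t, e h * (starRingEnd ℂ (c g) * (φ (g⁻¹ * h) : ℂ)) :=
          Finset.sum_congr rfl fun h _ => by ring
      _ = s * (starRingEnd ℂ (c g) * (φ (g⁻¹ * 1) : ℂ)) := collapse _
      _ = s * (starRingEnd ℂ (c g) * (φ g : ℂ)) := by rw [mul_one, hφinv]
  have hA3 : ∑ g ∈ t, ∑ h ∈ t, starRingEnd ℂ (e g) * c h * (φ (g⁻¹ * h) : ℂ)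
      = starRingEnd ℂ s * T := by
    rw [Finset.sum_comm, hT, Finset.mul_sum]
    refine Finset.sum_congr rfl fun h _ => ?_
    calc ∑ g ∈ t, starRingEnd ℂ (e g) * c h * (φ (g⁻¹ * h) : ℂ)
        = ∑ g ∈ t, starRingEnd ℂ (e g) * (c h * (φ (g⁻¹ * h) : ℂ)) :=
          Finset.sum_congr rfl fun g _ => by ring
      _ = starRingEnd ℂ s * (c h * (φ ((1:G)⁻¹ * h) : ℂ)) := collapse' _
      _ = starRingEnd ℂ s * (c h * (φ h : ℂ)) := by rw [inv_one, one_mul]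
  have hA4 : ∑ g ∈ t, ∑ h ∈ t, starRingEnd ℂ (e g) * e h * (φ (g⁻¹ * h) : ℂ) = 0 := by
    have : ∀ g, ∑ h ∈ t, starRingEnd ℂ (e g) * e h * (φ (g⁻¹ * h) : ℂ)
        = starRingEnd ℂ (e g) * (s * (φ (g⁻¹ * 1) : ℂ)) := by
      intro g
      calc ∑ h ∈ t, starRingEnd ℂ (e g) * e h * (φ (g⁻¹ * h) : ℂ)
          = ∑ h ∈ t, e h * (starRingEnd ℂ (e g) * (φ (g⁻¹ * h) : ℂ)) :=
            Finset.sum_congr rfl fun h _ => by ring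
        _ = s * (starRingEnd ℂ (e g) * (φ (g⁻¹ * 1) : ℂ)) := collapse _
        _ = _ := by ring
    rw [Finset.sum_congr rfl fun g _ => this g, collapse' (fun g => s * (φ (g⁻¹ * 1) : ℂ))]
    simp [hφe]
  have hII : Qa = Qc - s * U - starRingEnd ℂ s * T := by
    rw [hQa]
    calc ∑ g ∈ t, ∑ h ∈ t, starRingEnd ℂ (a g) * a h * (φ (g⁻¹ * h) : ℂ)
        = ∑ g ∈ t, ∑ h ∈ t,
            (starRingEnd ℂ (c g) * c h * (φ (g⁻¹ * h) : ℂ)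
              - starRingEnd ℂ (c g) * e h * (φ (g⁻¹ * h) : ℂ)
              - starRingEnd ℂ (e g) * c h * (φ (g⁻¹ * h) : ℂ)
              + starRingEnd ℂ (e g) * e h * (φ (g⁻¹ * h) : ℂ)) := by
          refine Finset.sum_congr rfl fun g _ => Finset.sum_congr rfl fun h _ => ?_
          rw [hae, hae, map_sub]; ring
      _ = Qc - s * U - starRingEnd ℂ s * T := by
          simp only [Finset.sum_add_distrib, Finset.sum_sub_distrib]
          rw [hA2, hA3, hA4, ← hQc, add_zero]
  -- key identity (I)
  have hB1 : ∑ g ∈ t, ∑ h ∈ t, starRingEnd ℂ (c g) * c h * (φ g : ℂ) = U * s := by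
    rw [hU, ← hst, Finset.sum_mul]
    refine Finset.sum_congr rfl fun g _ => ?_
    rw [Finset.mul_sum]
    exact Finset.sum_congr rfl fun h _ => by ring
  have hB2 : ∑ g ∈ t, ∑ h ∈ t, starRingEnd ℂ (c g) * c h * (φ h : ℂ) = starRingEnd ℂ s * T := by
    rw [← hst, map_sum, Finset.sum_mul]
    refine Finset.sum_congr rfl fun g _ => ?_
    rw [hT, Finset.mul_sum]
    exact Finset.sum_congr rfl fun h _ => by ring
  have hI : ∑ g ∈ c.support, ∑ h ∈ c.support,
      starRingEnd ℂ (c g) * c h * (gromovK φ g h : ℂ)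
      = (U * s + starRingEnd ℂ s * T - Qc) / 2 := by
    rw [dsum_ext c (fun g h => (gromovK φ g h : ℂ)) hct]
    calc ∑ g ∈ t, ∑ h ∈ t, starRingEnd ℂ (c g) * c h * (gromovK φ g h : ℂ)
        = ∑ g ∈ t, ∑ h ∈ t,
            ((starRingEnd ℂ (c g) * c h * (φ g : ℂ)
              + starRingEnd ℂ (c g) * c h * (φ h : ℂ)
              - starRingEnd ℂ (c g) * c h * (φ (g⁻¹ * h) : ℂ)) / 2) := by
          refine Finset.sum_congr rfl fun g _ => Finset.sum_congr rfl fun h _ => ?_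
          rw [gromovK]; push_cast; ring
      _ = (U * s + starRingEnd ℂ s * T - Qc) / 2 := by
          simp only [← Finset.sum_div, Finset.sum_add_distrib, Finset.sum_sub_distrib]
          rw [hB1, hB2, ← hQc]
  have hQare : Qa.re ≤ 0 := by
    rw [hQa, ← dsum_ext a (fun g h => (φ (g⁻¹ * h) : ℂ)) hat]
    exact hcn a hasum
  have hfin : ∑ g ∈ c.support, ∑ h ∈ c.support,
      starRingEnd ℂ (c g) * c h * (gromovK φ g h : ℂ) = -Qa / 2 := by
    rw [hI]; linear_combination (1/2 : ℂ) * hII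
  rw [hfin]
  have : (-Qa / 2 : ℂ) = ((2⁻¹ : ℝ) : ℂ) * (-Qa) := by push_cast; ring
  rw [this, Complex.re_ofReal_mul, Complex.neg_re]
  linarith

lemma gromovK_symm (φ : G → ℝ) (hφinv : ∀ g : G, φ g⁻¹ = φ g) (g h : G) :
    gromovK φ h g = gromovK φ g h := by
  rw [gromovK, gromovK, show h⁻¹ * g = (g⁻¹ * h)⁻¹ by simp [_root_.mul_inv_rev], hφinv]
  ring

open scoped ComplexOrder MatrixOrder in
lemma psd_factor {n : Type*} [Fintype n] [DecidableEq n] {M : Matrix n n ℂ} (h : M.PosSemidef) :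
    ∃ B : Matrix n n ℂ, M = star B * B :=
  CStarAlgebra.nonneg_iff_eq_star_mul_self.mp h.nonneg

lemma K2pos (φ : G → ℝ) (hφinv : ∀ g : G, φ g⁻¹ = φ g)
    (hKpos : ∀ c : G →₀ ℂ, 0 ≤ (∑ g ∈ c.support, ∑ h ∈ c.support,
        starRingEnd ℂ (c g) * c h * (gromovK φ g h : ℂ)).re)
    (b : G →₀ ℂ) :
    0 ≤ (∑ g ∈ b.support, ∑ h ∈ b.support,
        starRingEnd ℂ (b g) * b h * ((gromovK φ g h) ^ 2 : ℂ)).re := by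
  classical
  set n := ↥(b.support : Finset G)
  set M : Matrix n n ℂ := fun g h => (gromovK φ (g : G) (h : G) : ℂ) with hM
  -- extension helper
  have dsum_ext : ∀ (f : G →₀ ℂ) (w : G → G → ℂ) (t : Finset G), f.support ⊆ t →
      ∑ g ∈ f.support, ∑ h ∈ f.support, starRingEnd ℂ (f g) * f h * w g h
        = ∑ g ∈ t, ∑ h ∈ t, starRingEnd ℂ (f g) * f h * w g h := by
    intro f w t ht
    rw [Finset.sum_congr rfl (fun g _ => Finset.sum_subset ht
      (fun h _ hh => by simp [Finsupp.notMem_support_iff.mp hh]))]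
    exact Finset.sum_subset ht (fun g _ hg => by simp [Finsupp.notMem_support_iff.mp hg])
  have hMpsd : M.PosSemidef := by
    refine Matrix.PosSemidef.of_dotProduct_mulVec_nonneg ?_ ?_
    · ext g h
      rw [Matrix.conjTranspose_apply, hM]
      simp only [Complex.star_def, ← Complex.ofReal_def]
      rw [Complex.conj_ofReal, gromovK_symm φ hφinv]
    · intro x
      have hS : dotProduct (star x) (M *ᵥ x)
          = ∑ g : n, ∑ h : n, starRingEnd ℂ (x g) * x h * (gromovK φ (g:G) (h:G) : ℂ) := by
        simp only [dotProduct, Matrix.mulVec, Pi.star_apply, Complex.star_def, hM,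
          Finset.mul_sum]
        exact Finset.sum_congr rfl fun g _ => Finset.sum_congr rfl fun h _ => by ring
      -- the finsupp corresponding to x
      set c : G →₀ ℂ := ∑ g ∈ b.support.attach, Finsupp.single (g : G) (x g) with hc
      have hcapp : ∀ g : n, c (g : G) = x g := by
        intro g
        rw [hc, Finsupp.finset_sum_apply]
        have hterm : ∀ a ∈ b.support.attach,
            (Finsupp.single (a : G) (x a)) (g : G) = if a = g then x a else 0 := by
          intro a _
          rw [Finsupp.single_apply]
          exact if_congr Subtype.coe_inj rfl rfl
        rw [Finset.sum_congr rfl hterm, Finset.sum_ite_eq' _ g (fun a => x a),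
          if_pos (Finset.mem_attach _ _)]
      have hcsupp : c.support ⊆ b.support := by
        refine (Finsupp.support_finset_sum).trans ?_
        intro u hu
        rcases Finset.mem_biUnion.mp hu with ⟨a, _, hua⟩
        have := Finsupp.support_single_subset hua
        rw [Finset.mem_singleton] at this
        rw [this]
        exact a.2
      have hre : 0 ≤ (dotProduct (star x) (M *ᵥ x)).re := by
        rw [hS]
        have e1 : ∑ g ∈ b.support, ∑ h ∈ b.support,
                starRingEnd ℂ (c g) * c h * (gromovK φ g h : ℂ)
            = ∑ g : n, ∑ h : n, starRingEnd ℂ (x g) * x h * (gromovK φ (g:G) (h:G) : ℂ) := by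
          rw [← Finset.sum_coe_sort b.support
            (fun g => ∑ h ∈ b.support, starRingEnd ℂ (c g) * c h * (gromovK φ g h : ℂ))]
          refine Finset.sum_congr rfl fun g _ => ?_
          rw [← Finset.sum_coe_sort b.support
            (fun h => starRingEnd ℂ (c (g:G)) * c h * (gromovK φ (g:G) h : ℂ))]
          refine Finset.sum_congr rfl fun h _ => ?_
          rw [hcapp g, hcapp h]
        rw [← e1, ← dsum_ext c _ _ hcsupp]
        exact hKpos c
      have him : (dotProduct (star x) (M *ᵥ x)).im = 0 := by
        rw [← Complex.conj_eq_iff_im, hS, map_sum]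
        rw [Finset.sum_congr rfl (fun g (_ : g ∈ Finset.univ) => map_sum _ _ _)]
        rw [Finset.sum_comm]
        refine Finset.sum_congr rfl fun g _ => Finset.sum_congr rfl fun h _ => ?_
        simp only [_root_.map_mul, Complex.conj_conj, Complex.conj_ofReal]
        rw [gromovK_symm φ hφinv]
        ring
      rw [Complex.le_def]
      exact ⟨by simpa using hre, by simp [him]⟩
  obtain ⟨B, hB⟩ := psd_factor hMpsd
  have hMgh : ∀ g h : n, (gromovK φ (g:G) (h:G) : ℂ)
      = ∑ k : n, starRingEnd ℂ (B k g) * B k h := by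
    intro g h
    calc (gromovK φ (g:G) (h:G) : ℂ) = M g h := rfl
      _ = (Bᴴ * B) g h := by rw [hB, Matrix.star_eq_conjTranspose]
      _ = ∑ k : n, starRingEnd ℂ (B k g) * B k h := by
          simp [Matrix.mul_apply, Matrix.conjTranspose_apply, Complex.star_def]
  have htgt : ∑ g ∈ b.support, ∑ h ∈ b.support,
        starRingEnd ℂ (b g) * b h * ((gromovK φ g h : ℂ)) ^ 2
      = ∑ k : n, ∑ l : n,
          starRingEnd ℂ (∑ g : n, b (g:G) * B k g * B l g)
            * (∑ h : n, b (h:G) * B k h * B l h) := by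
    rw [← Finset.sum_coe_sort b.support
      (fun g => ∑ h ∈ b.support, starRingEnd ℂ (b g) * b h * ((gromovK φ g h : ℂ)) ^ 2)]
    calc ∑ g : n, ∑ h ∈ b.support,
            starRingEnd ℂ (b (g:G)) * b h * ((gromovK φ (g:G) h : ℂ)) ^ 2
        = ∑ g : n, ∑ h : n,
            starRingEnd ℂ (b (g:G)) * b (h:G) * ((gromovK φ (g:G) (h:G) : ℂ)) ^ 2 :=
          Finset.sum_congr rfl fun g _ => (Finset.sum_coe_sort b.support
            (fun h => starRingEnd ℂ (b (g:G)) * b h * ((gromovK φ (g:G) h : ℂ)) ^ 2)).symm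
      _ = ∑ g : n, ∑ h : n, ∑ k : n, ∑ l : n,
            starRingEnd ℂ (b (g:G) * B k g * B l g) * (b (h:G) * B k h * B l h) := by
          refine Finset.sum_congr rfl fun g _ => Finset.sum_congr rfl fun h _ => ?_
          rw [sq, hMgh g h, Finset.sum_mul_sum, Finset.mul_sum]
          refine Finset.sum_congr rfl fun k _ => ?_
          rw [Finset.mul_sum]
          refine Finset.sum_congr rfl fun l _ => ?_
          simp only [_root_.map_mul]
          ring
      _ = ∑ g : n, ∑ k : n, ∑ h : n, ∑ l : n,
            starRingEnd ℂ (b (g:G) * B k g * B l g) * (b (h:G) * B k h * B l h) :=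
          Finset.sum_congr rfl fun g _ => Finset.sum_comm
      _ = ∑ k : n, ∑ g : n, ∑ h : n, ∑ l : n,
            starRingEnd ℂ (b (g:G) * B k g * B l g) * (b (h:G) * B k h * B l h) :=
          Finset.sum_comm
      _ = ∑ k : n, ∑ g : n, ∑ l : n, ∑ h : n,
            starRingEnd ℂ (b (g:G) * B k g * B l g) * (b (h:G) * B k h * B l h) :=
          Finset.sum_congr rfl fun k _ => Finset.sum_congr rfl fun g _ => Finset.sum_comm
      _ = ∑ k : n, ∑ l : n, ∑ g : n, ∑ h : n,
            starRingEnd ℂ (b (g:G) * B k g * B l g) * (b (h:G) * B k h * B l h) :=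
          Finset.sum_congr rfl fun k _ => Finset.sum_comm
      _ = ∑ k : n, ∑ l : n,
            starRingEnd ℂ (∑ g : n, b (g:G) * B k g * B l g)
              * (∑ h : n, b (h:G) * B k h * B l h) := by
          refine Finset.sum_congr rfl fun k _ => Finset.sum_congr rfl fun l _ => ?_
          rw [map_sum, Finset.sum_mul_sum]
  rw [htgt, Complex.re_sum]
  refine Finset.sum_nonneg fun k _ => ?_
  rw [Complex.re_sum]
  refine Finset.sum_nonneg fun l _ => ?_
  rw [mul_comm, Complex.mul_conj]
  simp [Complex.normSq_nonneg]

end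

/-- For a conditionally negative `φ : G → ℝ` with `φ(e) = 0`, `φ(g) = φ(g⁻¹)`, and
the semigroup `T_t(λ_g) = e^{−tφ(g)} λ_g` on the group algebra, for every finite
linear combination `x = Σ_g x_g λ_g` one has
`Γ(x,x) = Σ_{g,h} conj(x_g) x_h K_φ(g,h) λ_{g⁻¹h}` and
`Γ₂(x,x) = Σ_{g,h} conj(x_g) x_h K_φ(g,h)² λ_{g⁻¹h}`; in particular `Γ₂ ≥ 0`
holds automatically since `K_φ²` is positive definite whenever `K_φ` is. -/
theorem group_algebra_gamma_forms (φ : G → ℝ)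
    (hφe : φ 1 = 0) (hφinv : ∀ g : G, φ g⁻¹ = φ g)
    (hcn : ∀ a : G →₀ ℂ, (∑ g ∈ a.support, a g) = 0 →
      (∑ g ∈ a.support, ∑ h ∈ a.support,
          starRingEnd ℂ (a g) * a h * (φ (g⁻¹ * h) : ℂ)).re ≤ 0)
    (T : ℝ → MonoidAlgebra ℂ G →ₗ[ℂ] MonoidAlgebra ℂ G)
    (hT : ∀ t : ℝ, ∀ g : G,
      T t (MonoidAlgebra.of ℂ G g) = (Real.exp (-t * φ g) : ℂ) • MonoidAlgebra.of ℂ G g)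
    (x : MonoidAlgebra ℂ G) :
    gaGamma φ x x
        = ∑ g ∈ x.coeff.support, ∑ h ∈ x.coeff.support,
            (starRingEnd ℂ (x.coeff g) * x.coeff h * (gromovK φ g h : ℂ)) •
              MonoidAlgebra.of ℂ G (g⁻¹ * h)
    ∧ gaGammaTwo φ x x
        = ∑ g ∈ x.coeff.support, ∑ h ∈ x.coeff.support,
            (starRingEnd ℂ (x.coeff g) * x.coeff h * ((gromovK φ g h) ^ 2 : ℂ)) •
              MonoidAlgebra.of ℂ G (g⁻¹ * h)
    ∧ ∀ b : G →₀ ℂ,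
        0 ≤ (∑ g ∈ b.support, ∑ h ∈ b.support,
            starRingEnd ℂ (b g) * b h * ((gromovK φ g h) ^ 2 : ℂ)).re := by
  have hx : x = ∑ g ∈ x.coeff.support, MonoidAlgebra.single g (x.coeff g) := by
    conv_lhs => rw [← MonoidAlgebra.sum_coeff_single x]
    rfl
  refine ⟨?_, ?_, fun b => K2pos φ hφinv (Kpos φ hφe hφinv hcn) b⟩
  · conv_lhs => rw [hx]
    rw [gaGamma_sum_left]
    refine Finset.sum_congr rfl fun g _ => ?_
    rw [gaGamma_sum_right]
    refine Finset.sum_congr rfl fun h _ => ?_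
    rw [gaGamma_single φ hφinv]
    simp [MonoidAlgebra.of_apply, MonoidAlgebra.smul_single]
  · conv_lhs => rw [hx]
    rw [gaGammaTwo_sum_left]
    refine Finset.sum_congr rfl fun g _ => ?_
    rw [gaGammaTwo_sum_right]
    refine Finset.sum_congr rfl fun h _ => ?_
    rw [gaGammaTwo_single φ hφinv]
    simp [MonoidAlgebra.of_apply, MonoidAlgebra.smul_single]
end
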